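/- Define w(x) = 1.8·x + 0.15 if x > 1/2 and w(x) = 1.8·x otherwise, for x ∈ [0,1]. Then for any finite multiset B of reals in [0,1] with total sum at most 1, the total weight ∑_{x∈B} w(x) is at most 1.95. -/
import Mathlib


noncomputable def w0 (x : ℝ) : ℝ := 1.8 * x + if x > 1/2 then 0.15 else 0

lemma w0_aux (B : Multiset ℝ) (hB : ∀ x ∈ B, 0 ≤ x)
    (hsum : B.sum ≤ 1) : (B.map w0).sum ≤ 1.8 * B.sum + 0.15 := by
  induction B using Multiset.induction with
  | empty => simp; norm_num
  | cons a B ih =>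
    have ha : 0 ≤ a := hB a (Multiset.mem_cons_self a B)
    have hB' : ∀ x ∈ B, 0 ≤ x := fun x hx => hB x (Multiset.mem_cons_of_mem hx)
    have hs : a + B.sum ≤ 1 := by simpa using hsum
    have hBs : 0 ≤ B.sum := Multiset.sum_nonneg hB'
    by_cases hc : a > 1/2
    · -- every element of B is ≤ B.sum < 1/2
      have hlt : B.sum < 1/2 := by linarith
      have hmap : B.map w0 = B.map (fun x => 1.8 * x) := by
        apply Multiset.map_congr rfl
        intro x hx
        have hx1 : x ≤ B.sum := Multiset.single_le_sum hB' x hx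
        have : ¬ x > 1/2 := by push_neg; linarith
        simp only [w0]; rw [if_neg this]; ring
      rw [Multiset.map_cons, Multiset.sum_cons, hmap, Multiset.sum_map_mul_left]
      simp only [w0, if_pos hc]
      simp [Multiset.sum_cons]
      ring_nf
      linarith
    · have := ih hB' (by linarith)
      rw [Multiset.map_cons, Multiset.sum_cons, Multiset.sum_cons]
      have hwa : w0 a = 1.8 * a := by simp only [w0]; rw [if_neg hc]; ring
      rw [hwa]
      linarith

theorem stmt0 (B : Multiset ℝ) (hB : ∀ x ∈ B, 0 ≤ x ∧ x ≤ 1)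
    (hsum : B.sum ≤ 1) : (B.map w0).sum ≤ 1.95 := by
  have := w0_aux B (fun x hx => (hB x hx).1) hsum
  norm_num at this ⊢
  linarith
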